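/- Let A = {3j : j ≥ 1} and let α ≈ 0.5437 be the real root of 1 - x - x^2 - x^3. Then for every n ≥ 1, the number of compositions of n with no part divisible by 3 (the Tribonacci-type count) equals the nearest integer to ((1+α)/(1+2α+3α^2)) · α^{-n}. -/

import Mathlib

noncomputable def compCount (A : Set ℕ) (n : ℕ) : ℕ :=
  Nat.card {l : List ℕ // l.sum = n ∧ ∀ x ∈ l, 0 < x ∧ x ∈ A}

namespace Trib

def d : ℕ → ℕ
  | 0 => 0
  | 1 => 1
  | 2 => 2
  | n + 3 => d (n + 2) + d (n + 1) + d n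

def Ok (x : ℕ) : Prop := 0 < x ∧ ¬ 3 ∣ x

def S (n : ℕ) : Type := {l : List ℕ // l.sum = n ∧ (∀ x ∈ l, Ok x) ∧ l ≠ []}

instance (n : ℕ) : Finite (S n) := by
  have : Function.Injective (fun l : S n => (⟨l.1, fun {i} hi => (l.2.2.1 i hi).1, l.2.1⟩ : Composition n)) := by
    intro a b h
    exact Subtype.ext (congrArg Composition.blocks h)
  exact Finite.of_injective _ this

lemma nil_of_sum_zero (l : List ℕ) (h : ∀ x ∈ l, Ok x) (hs : l.sum = 0) : l = [] := by
  cases l with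
  | nil => rfl
  | cons a t =>
    exfalso
    have := (h a (by simp)).1
    simp at hs
    omega

lemma card_S_zero : Nat.card (S 0) = 0 := by
  have : IsEmpty (S 0) := by
    constructor
    rintro ⟨l, hs, hok, hne⟩
    exact hne (nil_of_sum_zero l hok hs)
  simp [Nat.card_of_isEmpty]

lemma mem_S_one (l : List ℕ) (hs : l.sum = 1) (hok : ∀ x ∈ l, Ok x) : l = [1] := by
  cases l with
  | nil => simp at hs
  | cons a t =>
    have ha := (hok a (by simp)).1
    simp only [List.sum_cons] at hs
    have ha1 : a = 1 := by omega
    have ht : t = [] := nil_of_sum_zero t (fun x hx => hok x (by simp [hx])) (by omega)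
    simp [ha1, ht]

lemma card_S_one : Nat.card (S 1) = 1 := by
  rw [Nat.card_eq_one_iff_unique]
  constructor
  · constructor
    rintro ⟨l, hs, hok, -⟩ ⟨l', hs', hok', -⟩
    have := mem_S_one l hs hok
    have := mem_S_one l' hs' hok'
    exact Subtype.ext (by simp [*])
  · exact ⟨⟨[1], by simp, by rintro x hx; simp at hx; subst hx; exact ⟨one_pos, by decide⟩, by simp⟩⟩

lemma mem_S_two (l : List ℕ) (hs : l.sum = 2) (hok : ∀ x ∈ l, Ok x) : l = [2] ∨ l = [1, 1] := by
  cases l with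
  | nil => simp at hs
  | cons a t =>
    have ha := (hok a (by simp)).1
    simp only [List.sum_cons] at hs
    have hok' : ∀ x ∈ t, Ok x := fun x hx => hok x (by simp [hx])
    rcases (show a = 1 ∨ a = 2 by omega) with rfl | rfl
    · right
      have := mem_S_one t (by omega) hok'
      simp [this]
    · left
      have := nil_of_sum_zero t hok' (by omega)
      simp [this]

lemma card_S_two : Nat.card (S 2) = 2 := by
  rw [Nat.card_eq_two_iff]
  refine ⟨⟨[2], by simp, ?_, by simp⟩, ⟨[1,1], by simp, ?_, by simp⟩, ?_, ?_⟩
  · rintro x hx; simp at hx; subst hx; exact ⟨by norm_num, by decide⟩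
  · rintro x hx; simp at hx; subst hx; exact ⟨one_pos, by decide⟩
  · intro h
    have := congrArg Subtype.val h
    simp at this
  · apply Set.eq_univ_of_forall
    rintro ⟨l, hs, hok, -⟩
    rcases mem_S_two l hs hok with h | h <;> subst h
    exacts [Set.mem_insert _ _, Set.mem_insert_of_mem _ (Set.mem_singleton _)]

/-- The key bijection. -/
def g (n : ℕ) : S (n + 2) ⊕ S (n + 1) ⊕ S n → S (n + 3)
  | .inl ⟨t, ht⟩ => ⟨1 :: t, by
      refine ⟨by simp only [List.sum_cons, ht.1]; omega, ?_, by simp⟩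
      intro x hx
      rcases List.mem_cons.mp hx with h | h
      · subst h; exact ⟨one_pos, by decide⟩
      · exact ht.2.1 x h⟩
  | .inr (.inl ⟨t, ht⟩) => ⟨2 :: t, by
      refine ⟨by simp only [List.sum_cons, ht.1]; omega, ?_, by simp⟩
      intro x hx
      rcases List.mem_cons.mp hx with h | h
      · subst h; exact ⟨by norm_num, by decide⟩
      · exact ht.2.1 x h⟩
  | .inr (.inr ⟨l, hl⟩) => ⟨(l.headI + 3) :: l.tail, by
      obtain ⟨a, t, rfl⟩ := List.exists_cons_of_ne_nil hl.2.2
      obtain ⟨hs, hok, -⟩ := hl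
      simp only [List.headI, List.tail_cons, List.sum_cons] at hs ⊢
      have ha := hok a (by simp)
      refine ⟨by omega, ?_, by simp⟩
      intro x hx
      rcases List.mem_cons.mp hx with h | h
      · subst h
        obtain ⟨h1, h2⟩ := ha
        exact ⟨by omega, by omega⟩
      · exact hok x (by simp [h])⟩

lemma g_bijective (n : ℕ) : Function.Bijective (g n) := by
  constructor
  · intro a b h
    rcases a with (⟨t, ht⟩ | ⟨t, ht⟩ | ⟨l, hl⟩) <;>
      rcases b with (⟨u, hu⟩ | ⟨u, hu⟩ | ⟨m, hm⟩) <;>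
      have h' := congrArg Subtype.val h <;>
      simp only [g] at h'
    · simp only [List.cons.injEq] at h'
      exact congrArg Sum.inl (Subtype.ext h'.2)
    · simp at h'
    · obtain ⟨b, u', rfl⟩ := List.exists_cons_of_ne_nil hm.2.2
      simp only [List.headI, List.tail_cons, List.cons.injEq] at h'
      exact absurd h'.1 (by omega)
    · simp at h'
    · simp only [List.cons.injEq] at h'
      exact congrArg (fun x => Sum.inr (Sum.inl x)) (Subtype.ext h'.2)
    · obtain ⟨b, u', rfl⟩ := List.exists_cons_of_ne_nil hm.2.2
      simp only [List.headI, List.tail_cons, List.cons.injEq] at h'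
      exact absurd h'.1 (by omega)
    · obtain ⟨a, t', rfl⟩ := List.exists_cons_of_ne_nil hl.2.2
      simp only [List.headI, List.tail_cons, List.cons.injEq] at h'
      exact absurd h'.1 (by omega)
    · obtain ⟨a, t', rfl⟩ := List.exists_cons_of_ne_nil hl.2.2
      simp only [List.headI, List.tail_cons, List.cons.injEq] at h'
      exact absurd h'.1 (by omega)
    · obtain ⟨a, t', rfl⟩ := List.exists_cons_of_ne_nil hl.2.2
      obtain ⟨b, u', rfl⟩ := List.exists_cons_of_ne_nil hm.2.2
      simp only [List.headI, List.tail_cons, List.cons.injEq] at h'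
      obtain ⟨h1, h2⟩ := h'
      have hab : a = b := by omega
      subst hab; subst h2
      rfl
  · rintro ⟨l, hs, hok, hne⟩
    obtain ⟨p, t, rfl⟩ := List.exists_cons_of_ne_nil hne
    obtain ⟨hp1, hp3⟩ := hok p (by simp)
    simp only [List.sum_cons] at hs
    have hok' : ∀ x ∈ t, Ok x := fun x hx => hok x (by simp [hx])
    rcases (show p = 1 ∨ p = 2 ∨ 4 ≤ p by omega) with rfl | rfl | hp4
    · refine ⟨.inl ⟨t, by omega, hok', ?_⟩, ?_⟩
      · rintro rfl; simp at hs
      · exact Subtype.ext rfl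
    · refine ⟨.inr (.inl ⟨t, by omega, hok', ?_⟩), ?_⟩
      · rintro rfl; simp at hs
      · exact Subtype.ext rfl
    · refine ⟨.inr (.inr ⟨(p - 3) :: t, by simp only [List.sum_cons]; omega, ?_, by simp⟩), ?_⟩
      · intro x hx
        rcases List.mem_cons.mp hx with h | h
        · subst h; exact ⟨by omega, by omega⟩
        · exact hok' x h
      · apply Subtype.ext
        simp only [g, List.headI, List.tail_cons]
        rw [List.cons.injEq]
        exact ⟨by omega, rfl⟩

lemma card_S_rec (n : ℕ) :
    Nat.card (S (n + 3)) = Nat.card (S (n + 2)) + Nat.card (S (n + 1)) + Nat.card (S n) := by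
  rw [Nat.card_congr (Equiv.ofBijective (g n) (g_bijective n)).symm, Nat.card_sum, Nat.card_sum]
  ring

lemma card_S : ∀ n, Nat.card (S n) = d n
  | 0 => card_S_zero
  | 1 => card_S_one
  | 2 => card_S_two
  | (n + 3) => by
      rw [card_S_rec, card_S (n + 2), card_S (n + 1), card_S n, d]

lemma compCount_eq (n : ℕ) (hn : 1 ≤ n) :
    compCount {x | 0 < x ∧ ¬ 3 ∣ x} n = d n := by
  rw [← card_S n]
  apply Nat.card_congr
  apply Equiv.subtypeEquivRight
  intro l
  constructor
  · rintro ⟨hs, hok⟩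
    refine ⟨hs, fun x hx => (hok x hx).2, ?_⟩
    rintro rfl
    simp at hs
    omega
  · rintro ⟨hs, hok, -⟩
    exact ⟨hs, fun x hx => ⟨(hok x hx).1, hok x hx⟩⟩

set_option maxHeartbeats 1000000 in
theorem main (α : ℝ) (h0 : 0 < α) (h1 : α < 1)
    (hα : 1 - α - α ^ 2 - α ^ 3 = 0) (n : ℕ) (hn : 1 ≤ n) :
    (d n : ℤ) = round ((1 + α) / (1 + 2 * α + 3 * α ^ 2) * (1 / α) ^ n) := by
  have hb1 : (0.5436 : ℝ) < α := by nlinarith [sq_nonneg α, sq_nonneg (α - 0.5437), sq_nonneg (α + 1)]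
  have hb2 : α < 0.5438 := by nlinarith [sq_nonneg α, sq_nonneg (α - 0.5437), sq_nonneg (α + 1)]
  have hα0 : α ≠ 0 := ne_of_gt h0
  obtain ⟨K, hK⟩ : ∃ K : ℝ, K = (1 + α) / (1 + 2 * α + 3 * α ^ 2) := ⟨_, rfl⟩
  have hDpos : (0 : ℝ) < 1 + 2 * α + 3 * α ^ 2 := by positivity
  rw [← hK]
  have hK1 : (0.5188 : ℝ) < K := by
    rw [hK, lt_div_iff₀ hDpos]; nlinarith
  have hK2 : K < 0.5192 := by
    rw [hK, div_lt_iff₀ hDpos]; nlinarith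
  obtain ⟨E, hE⟩ : ∃ E : ℕ → ℝ, E = fun k => (d k : ℝ) - K * (1 / α) ^ k := ⟨_, rfl⟩
  have hE0 : E 0 = -K := by simp [hE, d]
  have hE1 : E 1 = 1 - K / α := by simp [hE, d]; ring
  have hE2 : E 2 = 2 - K / α ^ 2 := by
    simp [hE, d]; field_simp
  have hrec3 : ∀ k, E (k + 3) = E (k + 2) + E (k + 1) + E k := by
    intro k
    have hpow : (1 / α) ^ (k + 3) = (1 / α) ^ (k + 2) + (1 / α) ^ (k + 1) + (1 / α) ^ k := by
      have h3 : (1 / α) ^ 3 = (1 / α) ^ 2 + (1 / α) + 1 := by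
        field_simp
        linear_combination hα
      calc (1 / α) ^ (k + 3) = (1 / α) ^ k * (1 / α) ^ 3 := by ring
      _ = (1 / α) ^ k * ((1 / α) ^ 2 + (1 / α) + 1) := by rw [h3]
      _ = (1 / α) ^ (k + 2) + (1 / α) ^ (k + 1) + (1 / α) ^ k := by ring
    simp only [hE]
    rw [show d (k + 3) = d (k + 2) + d (k + 1) + d k from rfl]
    push_cast
    rw [hpow]
    ring
  have hrec2 : ∀ k, E (k + 2) + (α + α ^ 2) * E (k + 1) + α * E k = 0 := by
    intro k
    induction k with
    | zero =>
      rw [hE0, hE1, hE2, hK]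
      field_simp
      linear_combination (-(3*α^3 + 2*α^2 + 2*α + 1)) * hα
    | succ m ih =>
      have h3 := hrec3 m
      linear_combination h3 + (1 + α + α ^ 2) * ih + ((1 + α) * E (m + 1) + E m) * hα
  obtain ⟨Q, hQ⟩ : ∃ Q : ℕ → ℝ,
      Q = fun k => α * E k ^ 2 + (α + α ^ 2) * E k * E (k + 1) + E (k + 1) ^ 2 := ⟨_, rfl⟩
  have hQstep : ∀ k, Q (k + 1) = α * Q k := by
    intro k
    have h2 := hrec2 k
    simp only [hQ]
    linear_combination (E (k + 2) - α * E k) * h2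
  have hQpow : ∀ k, Q k = α ^ k * Q 0 := by
    intro k
    induction k with
    | zero => simp
    | succ m ih => rw [hQstep m, ih]; ring
  have hKpos : (0 : ℝ) < K := by linarith
  have hE1b1 : (0.0449 : ℝ) < E 1 := by
    rw [hE1]
    have h : K / α < 0.9551 := by rw [div_lt_iff₀ h0]; nlinarith
    linarith
  have hE1b2 : E 1 < 0.046 := by
    rw [hE1]
    have h : (0.954 : ℝ) < K / α := by rw [lt_div_iff₀ h0]; nlinarith
    linarith
  have hE1pos : (0 : ℝ) < E 1 := by linarith
  have hQ00 : Q 0 = α * K ^ 2 - (α + α ^ 2) * K * E 1 + E 1 ^ 2 := by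
    simp only [hQ]
    rw [show (0 : ℕ) + 1 = 1 from rfl, hE0]
    ring
  have hQ0ub : Q 0 < 0.13 := by
    have t1 : α * K ^ 2 < 0.1466 := by nlinarith [mul_pos hKpos hKpos]
    have tKE : (0.0232 : ℝ) < K * E 1 := by nlinarith [mul_pos hKpos hE1pos]
    have t2 : (0.0194 : ℝ) < (α + α ^ 2) * (K * E 1) := by
      have hs : (0.8391 : ℝ) < α + α ^ 2 := by nlinarith
      nlinarith [mul_pos hKpos hE1pos]
    have t3 : E 1 ^ 2 < 0.0022 := by nlinarith
    rw [hQ00]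
    nlinarith
  have hm : (0.36 : ℝ) < α - (α + α ^ 2) ^ 2 / 4 := by nlinarith
  have hQ0nn : (0 : ℝ) ≤ Q 0 := by
    rw [hQ00]
    nlinarith [sq_nonneg ((α + α ^ 2) / 2 * K - E 1),
      mul_le_mul_of_nonneg_right hm.le (sq_nonneg K)]
  have hEn2 : E n ^ 2 < 0.25 := by
    have hlow : (α - (α + α ^ 2) ^ 2 / 4) * E n ^ 2 ≤ Q n := by
      simp only [hQ]
      nlinarith [sq_nonneg ((α + α ^ 2) / 2 * E n + E (n + 1))]
    have hαn : α ^ n ≤ α := by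
      calc α ^ n ≤ α ^ 1 := pow_le_pow_of_le_one h0.le h1.le hn
      _ = α := pow_one α
    have hQn : Q n ≤ α * Q 0 := by
      rw [hQpow n]
      exact mul_le_mul_of_nonneg_right hαn hQ0nn
    nlinarith [sq_nonneg (E n)]
  have hlt : E n < 1 / 2 := by nlinarith [sq_nonneg (E n - 1 / 2)]
  have hgt : -(1 / 2) < E n := by nlinarith [sq_nonneg (E n + 1 / 2)]
  rw [hE] at hlt hgt
  simp only at hlt hgt
  rw [round_eq, eq_comm, Int.floor_eq_iff]
  push_cast
  constructor
  · linarith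
  · linarith


end Trib

theorem tribonacci_nearest_integer (α : ℝ) (h0 : 0 < α) (h1 : α < 1)
    (hα : 1 - α - α ^ 2 - α ^ 3 = 0) (n : ℕ) (hn : 1 ≤ n) :
    (compCount {x | 0 < x ∧ ¬ 3 ∣ x} n : ℤ) =
      round ((1 + α) / (1 + 2 * α + 3 * α ^ 2) * (1 / α) ^ n) := by
  rw [Trib.compCount_eq n hn]
  exact Trib.main α h0 h1 hα n hn
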